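/- A sequence f_n ∈ L²_n converges weakly to f ∈ L²(ℝ^d) (in the Kuwae–Shioya sense) if and only if ⟨e_n f_n, g⟩_{L²} → ⟨f, g⟩_{L²} for every g ∈ L²(ℝ^d). -/

import Mathlib

open MeasureTheory Filter Topology Set
open scoped ENNReal NNReal Pointwise

noncomputable section

abbrev Eucl (d : ℕ) := EuclideanSpace ℝ (Fin d)

/-- The half-open cube of side `1/n` centred at the lattice point `a/n`, `a ∈ ℤ^d`. -/
def cube (d n : ℕ) (a : Fin d → ℤ) : Set (Eucl d) :=
  {x | ∀ i, (a i : ℝ)/n - 1/(2*n) ≤ x i ∧ x i < (a i : ℝ)/n + 1/(2*n)}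

/-- `[x]_n`: the index of the lattice point of `(1/n)ℤ^d` nearest to `x`. -/
def lattOf (d n : ℕ) (x : Eucl d) : Fin d → ℤ := fun i => ⌊n * x i + 1/2⌋

/-- The restriction operator `r_n f (a) = n^d ∫_{ā} f`. -/
def rres (d n : ℕ) (f : Eucl d → ℝ) (a : Fin d → ℤ) : ℝ :=
  (n : ℝ) ^ d * ∫ x in cube d n a, f x

/-- The extension operator `e_n f (x) = f(a)` for `x ∈ ā`. -/
def eext (d n : ℕ) (f : (Fin d → ℤ) → ℝ) (x : Eucl d) : ℝ := f (lattOf d n x)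

/-- The `L²_n` norm on the lattice `(1/n)ℤ^d`, `‖u‖ = (n^{-d} ∑_a u(a)²)^{1/2}`. -/
def latNorm (d n : ℕ) (u : (Fin d → ℤ) → ℝ) : ℝ≥0∞ :=
  ((∑' a : Fin d → ℤ, ENNReal.ofReal ((u a) ^ 2)) / (n : ℝ≥0∞) ^ d) ^ (1/2 : ℝ)

/-- Strong convergence in the Kuwae–Shioya sense of `f_n ∈ L²_n` to `f ∈ L²(ℝ^d)`,
relative to a dense set `𝒞 ⊆ L²`: for every sequence `g_m ∈ 𝒞` with `g_m → f` in `L²`,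
`lim_m limsup_n ‖r_n g_m − f_n‖_{L²_n} = 0`. -/
def StrongConvTo (d : ℕ) (𝒞 : Set (Eucl d → ℝ)) (fn : ℕ → (Fin d → ℤ) → ℝ)
    (f : Eucl d → ℝ) : Prop :=
  ∀ g : ℕ → Eucl d → ℝ, (∀ m, g m ∈ 𝒞) →
    Tendsto (fun m => eLpNorm (g m - f) 2 volume) atTop (nhds 0) →
    Tendsto (fun m =>
        limsup (fun n => latNorm d n (fun a => rres d n (g m) a - fn n a)) atTop)
      atTop (nhds 0)

/-- The `L²_n` scalar product `⟨u,v⟩ = n^{-d} ∑_a u(a) v(a)`. -/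
def latInner (d n : ℕ) (u v : (Fin d → ℤ) → ℝ) : ℝ :=
  ((n : ℝ) ^ d)⁻¹ * ∑' a : Fin d → ℤ, u a * v a

/-- Weak convergence in the Kuwae–Shioya sense of `f_n ∈ L²_n` to `f ∈ L²(ℝ^d)`:
`⟨f_n, g_n⟩_{L²_n} → ⟨f, g⟩_{L²}` for every sequence `g_n ∈ L²_n` converging strongly
to some `g ∈ L²`. -/
def WeakConvTo (d : ℕ) (fn : ℕ → (Fin d → ℤ) → ℝ) (f : Eucl d → ℝ) : Prop :=
  ∀ (gn : ℕ → (Fin d → ℤ) → ℝ) (g : Eucl d → ℝ), MemLp g 2 volume →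
    (∀ n, Summable (fun a => (gn n a) ^ 2)) →
    StrongConvTo d {u | MemLp u 2 volume} gn g →
    Tendsto (fun n => latInner d n (fn n) (gn n)) atTop (nhds (∫ x, f x * g x))


private lemma interval_iff {c a x : ℝ} (hc : 0 < c) :
    (a/c - 1/(2*c) ≤ x ∧ x < a/c + 1/(2*c)) ↔ (a ≤ c*x + 1/2 ∧ c*x + 1/2 < a + 1) := by
  have h1 : a/c - 1/(2*c) = (a - 1/2)/c := by field_simp
  have h2 : a/c + 1/(2*c) = (a + 1/2)/c := by field_simp
  rw [h1, h2, div_le_iff₀ hc, lt_div_iff₀ hc]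
  constructor <;> rintro ⟨u, v⟩ <;> constructor <;> nlinarith [mul_comm x c]

lemma lattOf_eq_iff {d n : ℕ} (hn : 1 ≤ n) {x : Eucl d} {a : Fin d → ℤ} :
    lattOf d n x = a ↔ x ∈ cube d n a := by
  have hc : (0:ℝ) < n := by exact_mod_cast hn
  simp only [lattOf, cube, Set.mem_setOf_eq, funext_iff]
  refine forall_congr' fun i => ?_
  rw [Int.floor_eq_iff]
  exact (interval_iff hc).symm

lemma cube_eq_preimage {d n : ℕ} (hn : 1 ≤ n) (a : Fin d → ℤ) :
    cube d n a = lattOf d n ⁻¹' {a} := by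
  ext x; simp [← lattOf_eq_iff hn]

lemma measurable_apply_eucl {d : ℕ} (i : Fin d) : Measurable fun x : Eucl d => x i := by
  fun_prop

lemma measurable_lattOf {d n : ℕ} : Measurable (lattOf d n) :=
  measurable_pi_lambda _ fun i =>
    (((measurable_apply_eucl i).const_mul _).add_const _).floor

lemma measurableSet_cube {d n : ℕ} (a : Fin d → ℤ) : MeasurableSet (cube d n a) := by
  have : cube d n a = ⋂ i, (fun x : Eucl d => x i) ⁻¹'
      (Set.Ico ((a i : ℝ)/n - 1/(2*n)) ((a i : ℝ)/n + 1/(2*n))) := by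
    ext x; simp [cube, Set.mem_Ico]
  rw [this]
  exact MeasurableSet.iInter fun i => (measurable_apply_eucl i) measurableSet_Ico

lemma iUnion_cube {d n : ℕ} (hn : 1 ≤ n) : (⋃ a, cube d n a) = (Set.univ : Set (Eucl d)) :=
  Set.eq_univ_of_forall fun x => Set.mem_iUnion.mpr ⟨lattOf d n x, (lattOf_eq_iff hn).mp rfl⟩

lemma pairwise_disjoint_cube {d n : ℕ} (hn : 1 ≤ n) :
    Pairwise (Function.onFun Disjoint (cube d n)) := by
  intro a b hab
  simp only [Function.onFun, cube_eq_preimage hn]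
  exact Disjoint.preimage _ (disjoint_singleton.mpr hab)

lemma volume_cube {d n : ℕ} (hn : 1 ≤ n) (a : Fin d → ℤ) :
    volume (cube d n a) = ((n : ℝ≥0∞) ^ d)⁻¹ := by
  have hc : (0:ℝ) < n := by exact_mod_cast hn
  have hmp := EuclideanSpace.volume_preserving_symm_measurableEquiv_toLp (Fin d)
  have hset : cube d n a = (MeasurableEquiv.toLp 2 (Fin d → ℝ)).symm ⁻¹'
      (Set.univ.pi fun i => Set.Ico ((a i : ℝ)/n - 1/(2*n)) ((a i : ℝ)/n + 1/(2*n))) := by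
    ext x; simp [cube, Set.mem_pi, Set.mem_Ico]
  rw [hset, hmp.measure_preimage
    (MeasurableSet.univ_pi fun i => measurableSet_Ico).nullMeasurableSet,
    volume_pi_pi]
  have : ∀ i : Fin d, volume (Set.Ico ((a i : ℝ)/n - 1/(2*n)) ((a i : ℝ)/n + 1/(2*n)))
      = ((n : ℝ≥0∞))⁻¹ := by
    intro i
    rw [Real.volume_Ico]
    have : (a i : ℝ)/n + 1/(2*n) - ((a i : ℝ)/n - 1/(2*n)) = (n : ℝ)⁻¹ := by
      field_simp
      ring
    rw [this, ← ENNReal.ofReal_natCast n, ← ENNReal.ofReal_inv_of_pos hc]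
  calc (∏ i : Fin d, volume (Set.Ico ((a i : ℝ)/n - 1/(2*n)) ((a i : ℝ)/n + 1/(2*n))))
      = ∏ _i : Fin d, ((n : ℝ≥0∞))⁻¹ := Finset.prod_congr rfl fun i _ => this i
    _ = ((n : ℝ≥0∞) ^ d)⁻¹ := by rw [Finset.prod_const, Finset.card_univ, Fintype.card_fin, ENNReal.inv_pow]

lemma lintegral_latt {d n : ℕ} (hn : 1 ≤ n) (F : (Fin d → ℤ) → ℝ≥0∞) :
    ∫⁻ x : Eucl d, F (lattOf d n x) = (∑' a : Fin d → ℤ, F a) / (n : ℝ≥0∞) ^ d := by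
  rw [← setLIntegral_univ, ← iUnion_cube (d := d) hn,
    lintegral_iUnion (fun a => measurableSet_cube a) (pairwise_disjoint_cube hn)]
  have : ∀ a : Fin d → ℤ, ∫⁻ x in cube d n a, F (lattOf d n x) = F a / (n : ℝ≥0∞) ^ d := by
    intro a
    rw [setLIntegral_congr_fun (measurableSet_cube a)
      (fun x hx => by rw [(lattOf_eq_iff hn).mpr hx])]
    rw [setLIntegral_const, volume_cube hn, div_eq_mul_inv]
  simp_rw [this, div_eq_mul_inv]
  rw [ENNReal.tsum_mul_right]

lemma enorm_sq (t : ℝ) : (‖t‖₊ : ℝ≥0∞) ^ (2:ℝ) = ENNReal.ofReal (t ^ 2) := by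
  rw [show ((2:ℝ)) = ((2:ℕ):ℝ) by norm_num, ENNReal.rpow_natCast,
    ← enorm_eq_nnnorm, Real.enorm_eq_ofReal_abs, ← ENNReal.ofReal_pow (abs_nonneg t), sq_abs]

lemma eLpNorm_eext {d n : ℕ} (hn : 1 ≤ n) (u : (Fin d → ℤ) → ℝ) :
    eLpNorm (eext d n u) 2 volume = latNorm d n u := by
  rw [eLpNorm_eq_lintegral_rpow_enorm_toReal two_ne_zero ENNReal.ofNat_ne_top]
  have h2 : ((2:ℝ≥0∞)).toReal = (2:ℝ) := by norm_num
  rw [h2]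
  unfold eext latNorm
  have hl := lintegral_latt (d := d) hn (fun a => (‖u a‖₊ : ℝ≥0∞) ^ (2:ℝ))
  simp only [enorm_eq_nnnorm]
  rw [hl]
  simp_rw [enorm_sq]

lemma measurable_eext {d n : ℕ} (u : (Fin d → ℤ) → ℝ) : Measurable (eext d n u) := by
  have : Measurable u := measurable_of_countable u
  exact this.comp measurable_lattOf

lemma memℒp_eext {d n : ℕ} (hn : 1 ≤ n) {u : (Fin d → ℤ) → ℝ}
    (hu : Summable fun a => (u a) ^ 2) : MemLp (eext d n u) 2 volume := by
  refine ⟨(measurable_eext u).aestronglyMeasurable, ?_⟩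
  rw [eLpNorm_eext hn]
  unfold latNorm
  have h1 : (∑' a : Fin d → ℤ, ENNReal.ofReal ((u a) ^ 2)) ≠ ⊤ := by
    rw [← ENNReal.ofReal_tsum_of_nonneg (fun a => sq_nonneg _) hu]
    exact ENNReal.ofReal_ne_top
  have h2 : ((n : ℝ≥0∞) ^ d) ≠ 0 := by
    apply pow_ne_zero
    exact_mod_cast Nat.one_le_iff_ne_zero.mp hn
  exact ENNReal.rpow_lt_top_of_nonneg (by norm_num) (ENNReal.div_lt_top h1 h2).ne

-- L6 : integrability of products
lemma integrable_mul_L2 {f g : Eucl d → ℝ} (hf : MemLp f 2 volume) (hg : MemLp g 2 volume) :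
    Integrable (fun x => f x * g x) volume := by
  have h := MeasureTheory.L2.integrable_inner (𝕜 := ℝ) (hf.toLp f) (hg.toLp g)
  refine h.congr ?_
  filter_upwards [hf.coeFn_toLp, hg.coeFn_toLp] with x h1 h2
  simp [h1, h2, RCLike.inner_apply, mul_comm]


-- L7
lemma integral_eext_mul {d n : ℕ} (hn : 1 ≤ n) {u : (Fin d → ℤ) → ℝ}
    (hu : Summable fun a => (u a) ^ 2) {g : Eucl d → ℝ} (hg : MemLp g 2 volume) :
    ∫ x, eext d n u x * g x = latInner d n u (rres d n g) := by
  have hc : (0:ℝ) < (n:ℝ) ^ d := by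
    have : (0:ℝ) < (n:ℝ) := by exact_mod_cast hn
    positivity
  have hint : Integrable (fun x => eext d n u x * g x) volume :=
    integrable_mul_L2 (memℒp_eext hn hu) hg
  rw [← setIntegral_univ, ← iUnion_cube (d := d) (n := n) hn,
    integral_iUnion (fun a => measurableSet_cube a) (pairwise_disjoint_cube hn)
      (hint.integrableOn)]
  have hcube : ∀ a : Fin d → ℤ, ∫ x in cube d n a, eext d n u x * g x
      = ((n:ℝ)^d)⁻¹ * (u a * rres d n g a) := by
    intro a
    rw [setIntegral_congr_fun (measurableSet_cube a)
      (fun x hx => by rw [eext, (lattOf_eq_iff hn).mpr hx]),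
      integral_const_mul, rres]
    field_simp
  simp_rw [hcube]
  rw [tsum_mul_left, latInner]

-- L10
lemma rres_eext {d n : ℕ} (hn : 1 ≤ n) (u : (Fin d → ℤ) → ℝ) (a : Fin d → ℤ) :
    rres d n (eext d n u) a = u a := by
  have hc : (0:ℝ) < (n:ℝ) ^ d := by
    have : (0:ℝ) < (n:ℝ) := by exact_mod_cast hn
    positivity
  rw [rres, setIntegral_congr_fun (measurableSet_cube a)
      (fun x hx => by rw [eext, (lattOf_eq_iff hn).mpr hx]),
    setIntegral_const, measureReal_def, volume_cube hn, smul_eq_mul]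
  rw [ENNReal.toReal_inv, ENNReal.toReal_pow, ENNReal.toReal_natCast]
  field_simp

-- norm of toLp
lemma norm_toLp_eext {d n : ℕ} (hn : 1 ≤ n) {u : (Fin d → ℤ) → ℝ}
    (hu : Summable fun a => (u a) ^ 2) :
    ‖(memℒp_eext hn hu).toLp (eext d n u)‖ = (latNorm d n u).toReal := by
  rw [MeasureTheory.Lp.norm_toLp _ (memℒp_eext hn hu), eLpNorm_eext hn]

-- L12 : Cauchy-Schwarz for the lattice inner product
lemma abs_latInner_le {d n : ℕ} (hn : 1 ≤ n) {u w : (Fin d → ℤ) → ℝ}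
    (hu : Summable fun a => (u a) ^ 2) (hw : Summable fun a => (w a) ^ 2) :
    |latInner d n u w| ≤ (latNorm d n u).toReal * (latNorm d n w).toReal := by
  have h1 : latInner d n u w = ∫ x, eext d n u x * eext d n w x := by
    rw [integral_eext_mul hn hu (memℒp_eext hn hw)]
    congr 1
    funext a
    rw [rres_eext hn]
  have h2 : ∫ x, eext d n u x * eext d n w x
      = inner ℝ ((memℒp_eext hn hu).toLp (eext d n u)) ((memℒp_eext hn hw).toLp (eext d n w)) := by
    rw [MeasureTheory.L2.inner_def]
    refine integral_congr_ae ?_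
    filter_upwards [(memℒp_eext hn hu).coeFn_toLp, (memℒp_eext hn hw).coeFn_toLp] with x e1 e2
    simp [e1, e2, RCLike.inner_apply, mul_comm]
  rw [h1, h2, ← norm_toLp_eext hn hu, ← norm_toLp_eext hn hw]
  exact abs_real_inner_le_norm _ _

-- integrability on cubes
lemma integrableOn_cube {d n : ℕ} (hn : 1 ≤ n) {g : Eucl d → ℝ} (hg : MemLp g 2 volume)
    (a : Fin d → ℤ) : IntegrableOn g (cube d n a) volume := by
  have hfin : IsFiniteMeasure (volume.restrict (cube d n a)) := by
    constructor
    rw [Measure.restrict_apply_univ, volume_cube hn]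
    exact ENNReal.inv_lt_top.mpr (by
      have : (1:ℝ≥0∞) ≤ (n : ℝ≥0∞) ^ d := one_le_pow_of_one_le' (by exact_mod_cast hn) d
      exact lt_of_lt_of_le zero_lt_one this)
  exact (hg.restrict _).integrable (by norm_num)

-- L8 : linearity of rres in the function
lemma rres_sub {d n : ℕ} (hn : 1 ≤ n) {g₁ g₂ : Eucl d → ℝ} (h₁ : MemLp g₁ 2 volume)
    (h₂ : MemLp g₂ 2 volume) (a : Fin d → ℤ) :
    rres d n (g₁ - g₂) a = rres d n g₁ a - rres d n g₂ a := by
  unfold rres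
  rw [← mul_sub, ← integral_sub (integrableOn_cube hn h₁ a) (integrableOn_cube hn h₂ a)]
  rfl

-- L9 : contraction, ENNReal-level bound on one cube
lemma sq_rres_le {d n : ℕ} (hn : 1 ≤ n) {g : Eucl d → ℝ} (hg : MemLp g 2 volume)
    (a : Fin d → ℤ) :
    ENNReal.ofReal ((rres d n g a) ^ 2)
      ≤ (n : ℝ≥0∞) ^ d * ∫⁻ x in cube d n a, (‖g x‖₊ : ℝ≥0∞) ^ (2:ℝ) := by
  set N : ℝ≥0∞ := (n : ℝ≥0∞) ^ d with hN
  have hN0 : N ≠ 0 := pow_ne_zero _ (by exact_mod_cast Nat.one_le_iff_ne_zero.mp hn)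
  have hNt : N ≠ ⊤ := ENNReal.pow_ne_top (ENNReal.natCast_ne_top n)
  -- step 1 : |∫ g|ₑ ≤ ∫⁻ ‖g‖ₑ
  have h1 : ENNReal.ofReal ((∫ x in cube d n a, g x) ^ 2)
      ≤ (∫⁻ x in cube d n a, (‖g x‖₊ : ℝ≥0∞)) ^ 2 := by
    rw [← enorm_sq, show ((2:ℝ)) = ((2:ℕ):ℝ) by norm_num, ENNReal.rpow_natCast]
    exact pow_le_pow_left' (enorm_integral_le_lintegral_enorm _) 2
  -- step 2 : Cauchy-Schwarz
  have h2 : (∫⁻ x in cube d n a, (‖g x‖₊ : ℝ≥0∞))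
      ≤ (∫⁻ x in cube d n a, (‖g x‖₊ : ℝ≥0∞) ^ (2:ℝ)) ^ (1/2:ℝ) * N⁻¹ ^ (1/2:ℝ) := by
    have hconj : Real.HolderConjugate 2 2 := by
      constructor <;> norm_num
    have := ENNReal.lintegral_mul_le_Lp_mul_Lq (volume.restrict (cube d n a)) hconj
      (f := fun x => (‖g x‖₊ : ℝ≥0∞)) (g := fun _ => 1)
      (hg.aestronglyMeasurable.enorm.restrict) aemeasurable_const
    simpa [Measure.restrict_apply_univ, volume_cube hn, ENNReal.one_rpow] using this
  -- combine
  have h3 : ENNReal.ofReal ((rres d n g a) ^ 2)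
      = N ^ 2 * ENNReal.ofReal ((∫ x in cube d n a, g x) ^ 2) := by
    rw [rres, mul_pow, ENNReal.ofReal_mul (by positivity), ENNReal.ofReal_pow (by positivity),
      ENNReal.ofReal_pow (Nat.cast_nonneg n), ENNReal.ofReal_natCast, ← hN]
  calc ENNReal.ofReal ((rres d n g a) ^ 2)
      = N ^ 2 * ENNReal.ofReal ((∫ x in cube d n a, g x) ^ 2) := h3
    _ ≤ N ^ 2 * ((∫⁻ x in cube d n a, (‖g x‖₊ : ℝ≥0∞)) ^ 2) := by
        exact mul_le_mul_right h1 _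
    _ ≤ N ^ 2 * (((∫⁻ x in cube d n a, (‖g x‖₊ : ℝ≥0∞) ^ (2:ℝ)) ^ (1/2:ℝ) * N⁻¹ ^ (1/2:ℝ)) ^ 2) := by
        exact mul_le_mul_right (pow_le_pow_left' h2 2) _
    _ = N ^ 2 * ((∫⁻ x in cube d n a, (‖g x‖₊ : ℝ≥0∞) ^ (2:ℝ)) * N⁻¹) := by
        congr 1
        rw [mul_pow, ← ENNReal.rpow_natCast (_ ^ (1/2:ℝ)) 2, ← ENNReal.rpow_natCast (N⁻¹ ^ (1/2:ℝ)) 2,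
          ← ENNReal.rpow_mul, ← ENNReal.rpow_mul]
        norm_num
    _ = N * (N * N⁻¹) * ∫⁻ x in cube d n a, (‖g x‖₊ : ℝ≥0∞) ^ (2:ℝ) := by ring
    _ = N * ∫⁻ x in cube d n a, (‖g x‖₊ : ℝ≥0∞) ^ (2:ℝ) := by
        rw [ENNReal.mul_inv_cancel hN0 hNt, mul_one]

lemma lintegral_sq_ne_top {d : ℕ} {g : Eucl d → ℝ} (hg : MemLp g 2 volume) :
    (∫⁻ x, (‖g x‖₊ : ℝ≥0∞) ^ (2:ℝ)) ≠ ⊤ := by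
  intro htop
  have h2 := hg.2
  rw [eLpNorm_eq_lintegral_rpow_enorm_toReal two_ne_zero ENNReal.ofNat_ne_top] at h2
  have h2' : ((2:ℝ≥0∞)).toReal = (2:ℝ) := by norm_num
  rw [h2'] at h2
  simp only [enorm_eq_nnnorm, htop] at h2
  simp [ENNReal.top_rpow_of_pos] at h2

lemma eLpNorm_two_eq {d : ℕ} (g : Eucl d → ℝ) :
    eLpNorm g 2 volume = (∫⁻ x, (‖g x‖₊ : ℝ≥0∞) ^ (2:ℝ)) ^ (1/2:ℝ) := by
  rw [eLpNorm_eq_lintegral_rpow_enorm_toReal two_ne_zero ENNReal.ofNat_ne_top]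
  norm_num [enorm_eq_nnnorm]

lemma tsum_sq_rres_le {d n : ℕ} (hn : 1 ≤ n) {g : Eucl d → ℝ} (hg : MemLp g 2 volume) :
    ∑' a : Fin d → ℤ, ENNReal.ofReal ((rres d n g a) ^ 2)
      ≤ (n : ℝ≥0∞) ^ d * ∫⁻ x, (‖g x‖₊ : ℝ≥0∞) ^ (2:ℝ) := by
  calc ∑' a : Fin d → ℤ, ENNReal.ofReal ((rres d n g a) ^ 2)
      ≤ ∑' a : Fin d → ℤ, (n : ℝ≥0∞) ^ d * ∫⁻ x in cube d n a, (‖g x‖₊ : ℝ≥0∞) ^ (2:ℝ) :=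
        ENNReal.tsum_le_tsum (fun a => sq_rres_le hn hg a)
    _ = (n : ℝ≥0∞) ^ d * ∑' a : Fin d → ℤ, ∫⁻ x in cube d n a, (‖g x‖₊ : ℝ≥0∞) ^ (2:ℝ) :=
        ENNReal.tsum_mul_left
    _ = (n : ℝ≥0∞) ^ d * ∫⁻ x, (‖g x‖₊ : ℝ≥0∞) ^ (2:ℝ) := by
        rw [← lintegral_iUnion (fun a => measurableSet_cube a) (pairwise_disjoint_cube hn),
          iUnion_cube hn, setLIntegral_univ]

lemma latNorm_rres_le {d n : ℕ} (hn : 1 ≤ n) {g : Eucl d → ℝ} (hg : MemLp g 2 volume) :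
    latNorm d n (rres d n g) ≤ eLpNorm g 2 volume := by
  have hN0 : ((n : ℝ≥0∞) ^ d) ≠ 0 := pow_ne_zero _ (by exact_mod_cast Nat.one_le_iff_ne_zero.mp hn)
  have hNt : ((n : ℝ≥0∞) ^ d) ≠ ⊤ := ENNReal.pow_ne_top (ENNReal.natCast_ne_top n)
  rw [latNorm, eLpNorm_two_eq]
  refine ENNReal.rpow_le_rpow ?_ (by norm_num)
  rw [ENNReal.div_le_iff hN0 hNt, mul_comm]
  exact tsum_sq_rres_le hn hg

lemma summable_of_tsum_ofReal_ne_top {α : Type*} {f : α → ℝ} (h0 : ∀ a, 0 ≤ f a)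
    (h : (∑' a, ENNReal.ofReal (f a)) ≠ ⊤) : Summable f := by
  have h1 : Summable (fun a => (f a).toNNReal) := by
    rw [← ENNReal.tsum_coe_ne_top_iff_summable]
    exact h
  have h2 : Summable (fun a => ((f a).toNNReal : ℝ)) := NNReal.summable_coe.mpr h1
  exact h2.congr (fun a => Real.coe_toNNReal _ (h0 a))

lemma summable_sq_rres {d n : ℕ} (hn : 1 ≤ n) {g : Eucl d → ℝ} (hg : MemLp g 2 volume) :
    Summable fun a : Fin d → ℤ => (rres d n g a) ^ 2 := by
  refine summable_of_tsum_ofReal_ne_top (fun a => sq_nonneg _) ?_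
  refine ne_top_of_le_ne_top ?_ (tsum_sq_rres_le hn hg)
  exact ENNReal.mul_ne_top (ENNReal.pow_ne_top (ENNReal.natCast_ne_top n)) (lintegral_sq_ne_top hg)

lemma summable_mul_of_sq {α : Type*} {u w : α → ℝ} (hu : Summable fun a => (u a) ^ 2)
    (hw : Summable fun a => (w a) ^ 2) : Summable fun a => u a * w a := by
  refine Summable.of_abs (Summable.of_nonneg_of_le (fun a => abs_nonneg _)
    (fun a => ?_) (((hu.add hw).mul_left (1/2 : ℝ))))
  have := sq_nonneg (|u a| - |w a|)
  rw [abs_mul]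
  nlinarith [sq_abs (u a), sq_abs (w a)]

lemma summable_sq_sub {α : Type*} {u w : α → ℝ} (hu : Summable fun a => (u a) ^ 2)
    (hw : Summable fun a => (w a) ^ 2) : Summable fun a => (u a - w a) ^ 2 := by
  have h := (hu.add hw).sub ((summable_mul_of_sq hu hw).mul_left 2)
  exact h.congr (fun a => by ring)

lemma latNorm_sub_symm {d n : ℕ} (u w : (Fin d → ℤ) → ℝ) :
    latNorm d n (fun a => u a - w a) = latNorm d n (fun a => w a - u a) := by
  unfold latNorm
  congr 1
  congr 1
  exact tsum_congr fun a => by rw [show (u a - w a)^2 = (w a - u a)^2 by ring]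

lemma latNorm_ne_top {d n : ℕ} (hn : 1 ≤ n) {u : (Fin d → ℤ) → ℝ}
    (hu : Summable fun a => (u a) ^ 2) : latNorm d n u ≠ ⊤ := by
  rw [← eLpNorm_eext hn]
  exact (memℒp_eext hn hu).2.ne

/-- Kuwae–Shioya weak convergence of `f_n ∈ L²_n` to `f ∈ L²(ℝ^d)` holds if and only if
`⟨e_n f_n, g⟩_{L²} → ⟨f, g⟩_{L²}` for every `g ∈ L²(ℝ^d)`. -/
theorem weak_convergence_iff (d : ℕ)
    (fn : ℕ → (Fin d → ℤ) → ℝ) (hfn : ∀ n, Summable (fun a => (fn n a) ^ 2))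
    (f : Eucl d → ℝ) (hf : MemLp f 2 volume) :
    WeakConvTo d fn f ↔
      ∀ g : Eucl d → ℝ, MemLp g 2 volume →
        Tendsto (fun n => ∫ x, eext d n (fn n) x * g x) atTop
          (nhds (∫ x, f x * g x)) := by
  constructor
  · -- forward direction
    intro hW g hg
    have hsum : ∀ n, Summable fun a : Fin d → ℤ => (rres d n g a) ^ 2 := by
      intro n
      rcases Nat.eq_zero_or_pos n with h0 | h1
      · subst h0
        rcases Nat.eq_zero_or_pos d with hd | hd
        · subst hd
          exact Summable.of_finite
        · have hz : ∀ a : Fin d → ℤ, rres d 0 g a = 0 := by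
            intro a
            rw [rres]
            have : ((0:ℕ):ℝ) ^ d = 0 := by
              rw [Nat.cast_zero]
              exact zero_pow (by omega)
            rw [this, zero_mul]
          refine summable_zero.congr fun a => by rw [hz a]; norm_num
      · exact summable_sq_rres h1 hg
    have hstrong : StrongConvTo d {u | MemLp u 2 volume} (fun n => rres d n g) g := by
      intro gm hgm hconv
      have key : ∀ m, limsup (fun n => latNorm d n
          (fun a => rres d n (gm m) a - rres d n g a)) atTop ≤ eLpNorm (gm m - g) 2 volume := by
        intro m
        apply limsup_le_of_le (by isBoundedDefault)
        filter_upwards [eventually_ge_atTop 1] with n hn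
        have heq : (fun a => rres d n (gm m) a - rres d n g a) = rres d n (gm m - g) := by
          funext a; rw [rres_sub hn (hgm m) hg]
        rw [heq]
        exact latNorm_rres_le hn ((hgm m).sub hg)
      exact tendsto_of_tendsto_of_tendsto_of_le_of_le' tendsto_const_nhds hconv
        (Filter.Eventually.of_forall fun m => zero_le)
        (Filter.Eventually.of_forall key)
    have hT := hW (fun n => rres d n g) g hg hsum hstrong
    refine Tendsto.congr' ?_ hT
    filter_upwards [eventually_ge_atTop 1] with n hn
    exact (integral_eext_mul hn (hfn n) hg).symm
  · -- reverse direction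
    intro h gn g hg hgsum hstrong
    classical
    set φ : ℕ → (Lp ℝ 2 (volume : Measure (Eucl d))) →L[ℝ] ℝ := fun n =>
      if hn : 1 ≤ n then innerSL ℝ ((memℒp_eext hn (hfn n)).toLp (eext d n (fn n))) else 0
      with hφ
    have hφval : ∀ (n : ℕ) (hn : 1 ≤ n) (L : Lp ℝ 2 (volume : Measure (Eucl d))),
        φ n L = ∫ x, eext d n (fn n) x * L x := by
      intro n hn L
      simp only [hφ, dif_pos hn]
      rw [innerSL_apply_apply, MeasureTheory.L2.inner_def]
      refine integral_congr_ae ?_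
      filter_upwards [(memℒp_eext hn (hfn n)).coeFn_toLp] with x e1
      simp [e1, RCLike.inner_apply, mul_comm]
    have hφbound : ∀ L : Lp ℝ 2 (volume : Measure (Eucl d)), ∃ C, ∀ n, ‖φ n L‖ ≤ C := by
      intro L
      have hconv := (h L (Lp.memLp L)).abs
      obtain ⟨C, hC⟩ := hconv.bddAbove_range
      refine ⟨max C 0, fun n => ?_⟩
      by_cases hn : 1 ≤ n
      · rw [hφval n hn L, Real.norm_eq_abs]
        exact le_max_of_le_left (hC ⟨n, rfl⟩)
      · simp only [hφ, dif_neg hn]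
        simpa using le_max_right C 0
    obtain ⟨C', hC'⟩ := banach_steinhaus hφbound
    set M := max C' 0 with hMdef
    have hM : ∀ n, 1 ≤ n → (latNorm d n (fn n)).toReal ≤ M := by
      intro n hn
      have hnorm : ‖φ n‖ = (latNorm d n (fn n)).toReal := by
        simp only [hφ, dif_pos hn]
        rw [innerSL_apply_norm, norm_toLp_eext hn (hfn n)]
      calc (latNorm d n (fn n)).toReal = ‖φ n‖ := hnorm.symm
        _ ≤ C' := hC' n
        _ ≤ M := le_max_left _ _
    have hlim0 : limsup (fun n => latNorm d n (fun a => rres d n g a - gn n a)) atTop = 0 := by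
      have hs := hstrong (fun _ => g) (fun _ => hg) (by
        have hz : (fun (_ : ℕ) => eLpNorm ((fun (_ : ℕ) => g) 0 - g) 2 volume)
            = fun (_ : ℕ) => (0 : ℝ≥0∞) := by
          funext m
          simp [sub_self]
        simpa [hz] using (tendsto_const_nhds : Tendsto (fun (_ : ℕ) => (0:ℝ≥0∞)) atTop (𝓝 0)))
      exact tendsto_nhds_unique tendsto_const_nhds hs
    have hlim0' : Tendsto (fun n => latNorm d n (fun a => gn n a - rres d n g a)) atTop (𝓝 0) := by
      have hsymm : (fun n => latNorm d n (fun a => gn n a - rres d n g a))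
          = fun n => latNorm d n (fun a => rres d n g a - gn n a) := by
        funext n; exact latNorm_sub_symm _ _
      rw [hsymm]
      exact tendsto_of_le_liminf_of_limsup_le (zero_le) hlim0.le
    have htoReal : Tendsto (fun n => (latNorm d n (fun a => gn n a - rres d n g a)).toReal)
        atTop (𝓝 0) := by
      have := (ENNReal.tendsto_toReal (a := 0) (by simp)).comp hlim0'
      simpa [Function.comp_def] using this
    have hest : ∀ᶠ n in atTop, |latInner d n (fn n) (gn n) - ∫ x, eext d n (fn n) x * g x|
        ≤ M * (latNorm d n (fun a => gn n a - rres d n g a)).toReal := by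
      filter_upwards [eventually_ge_atTop 1] with n hn
      have hr := summable_sq_rres hn hg
      have e1 : ∫ x, eext d n (fn n) x * g x = latInner d n (fn n) (rres d n g) :=
        integral_eext_mul hn (hfn n) hg
      have e2 : latInner d n (fn n) (gn n) - latInner d n (fn n) (rres d n g)
          = latInner d n (fn n) (fun a => gn n a - rres d n g a) := by
        unfold latInner
        rw [← mul_sub, ← Summable.tsum_sub (summable_mul_of_sq (hfn n) (hgsum n))
          (summable_mul_of_sq (hfn n) hr)]
        congr 1
        exact tsum_congr fun a => by ring
      rw [e1, e2]
      calc |latInner d n (fn n) (fun a => gn n a - rres d n g a)|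
          ≤ (latNorm d n (fn n)).toReal
            * (latNorm d n (fun a => gn n a - rres d n g a)).toReal :=
            abs_latInner_le hn (hfn n) (summable_sq_sub (hgsum n) hr)
        _ ≤ M * (latNorm d n (fun a => gn n a - rres d n g a)).toReal :=
            mul_le_mul_of_nonneg_right (hM n hn) ENNReal.toReal_nonneg
    have hdiff : Tendsto (fun n => latInner d n (fn n) (gn n)
        - ∫ x, eext d n (fn n) x * g x) atTop (𝓝 0) := by
      refine squeeze_zero_norm'
        (a := fun n => M * (latNorm d n (fun a => gn n a - rres d n g a)).toReal) ?_ ?_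
      · simpa [Real.norm_eq_abs] using hest
      · simpa using htoReal.const_mul M
    have hbase := h g hg
    have hadd := hdiff.add hbase
    simp only [zero_add] at hadd
    exact hadd.congr fun n => by ring
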